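/- Let G and H be simple graphs on n vertices that share n−1 cards via vertices u ∈ V(G), w ∈ V(H) and a bijection π. Suppose Δ(G) = Δ(H) ≤ n−2, the vertices of maximum degree form a clique in G and also in H, deg(u,G) = Δ(G), deg(w,H) = Δ(H), and ℓ(G) = ℓ(H) = ℓ. Then for every integer r ≥ 1 with n − ℓ − r ≠ 0 we have κ_r(G) = κ_r(H). -/

import Mathlib

open SimpleGraph Finset


open SimpleGraph

/-- `kappa G r` is the number of `r`-cliques of the graph `G`. -/
noncomputable def kappa {V : Type*} (G : SimpleGraph V) (r : ℕ) : ℕ :=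
  (G.cliqueSet r).ncard

/-- `degR G r v` is the number of `r`-cliques of `G` that contain the vertex `v`. -/
noncomputable def degR {V : Type*} (G : SimpleGraph V) (r : ℕ) (v : V) : ℕ :=
  {s | s ∈ G.cliqueSet r ∧ v ∈ s}.ncard

/-- `deg G v` is the degree of the vertex `v` in `G`. -/
noncomputable def deg {V : Type*} (G : SimpleGraph V) (v : V) : ℕ :=
  (G.neighborSet v).ncard

/-- `gcard G v` is the card `G - v`: the induced subgraph of `G` on `V(G) \ {v}`. -/
def gcard {V : Type*} (G : SimpleGraph V) (v : V) : SimpleGraph {x : V // x ≠ v} :=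
  G.induce {x : V | x ≠ v}

/-- The maximum degree `Δ(G)`. -/
noncomputable def maxDeg {n : ℕ} (G : SimpleGraph (Fin n)) : ℕ :=
  Finset.univ.sup (fun v => deg G v)

/-- The minimum degree `δ(G)`. -/
noncomputable def minDeg {n : ℕ} (G : SimpleGraph (Fin n)) : ℕ :=
  sInf (Set.range (fun v => deg G v))

/-- `ℓ(G)`: the number of vertices of maximum degree. -/
noncomputable def numMaxDeg {n : ℕ} (G : SimpleGraph (Fin n)) : ℕ :=
  (Finset.univ.filter (fun v => deg G v = maxDeg G)).card

/-- `G` and `H` share `n-1` cards via the vertices `u`, `w` and the bijection `π`: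
for every `v ≠ u`, the card `G - v` is isomorphic to the card `H - π(v)`. -/
def ShareCardsVia {n : ℕ} (G H : SimpleGraph (Fin n)) (u w : Fin n)
    (π : {x : Fin n // x ≠ u} ≃ {y : Fin n // y ≠ w}) : Prop :=
  ∀ v : {x : Fin n // x ≠ u}, Nonempty (gcard G v.1 ≃g gcard H (π v).1)

/-- `G` and `H` share `n-1` cards. -/
def ShareCards {n : ℕ} (G H : SimpleGraph (Fin n)) : Prop :=
  ∃ (u w : Fin n) (π : {x : Fin n // x ≠ u} ≃ {y : Fin n // y ≠ w}),
    ShareCardsVia G H u w π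

set_option linter.unusedSectionVars false
namespace CliqueAux

variable {α β : Type*}

section Defs
variable [Fintype α] [DecidableEq α] (G : SimpleGraph α) [DecidableRel G.Adj]

/-- number of r-cliques (finset version) -/
def kapF (r : ℕ) : ℕ := (G.cliqueFinset r).card

/-- number of r-cliques through v -/
def AF (r : ℕ) (v : α) : ℕ := ((G.cliqueFinset r).filter (fun T => v ∈ T)).card

/-- degree, finset version -/
def degF (v : α) : ℕ := (G.neighborFinset v).card

/-- sum of degrees -/
def E2F : ℕ := ∑ v, degF G v

/-- sum over vertices of degree D of number of r-cliques through them -/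
def tF (r D : ℕ) : ℕ := ∑ v, if degF G v = D then AF G r v else 0

end Defs

section Iso
variable [Fintype α] [DecidableEq α] [Fintype β] [DecidableEq β]
variable {A : SimpleGraph α} {B : SimpleGraph β} [DecidableRel A.Adj] [DecidableRel B.Adj]

lemma isNClique_iso (e : A ≃g B) {r : ℕ} {T : Finset α} :
    B.IsNClique r (T.map e.toEquiv.toEmbedding) ↔ A.IsNClique r T := by
  simp only [isNClique_iff, Finset.card_map, and_congr_left_iff]
  intro _
  constructor
  · intro h a ha b hb hab
    have h1 : e a ∈ (T.map e.toEquiv.toEmbedding : Finset β) :=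
      Finset.mem_map_of_mem _ (Finset.mem_coe.mp ha)
    have h2 : e b ∈ (T.map e.toEquiv.toEmbedding : Finset β) :=
      Finset.mem_map_of_mem _ (Finset.mem_coe.mp hb)
    exact e.map_adj_iff.mp (h h1 h2 (e.toEquiv.injective.ne hab))
  · intro h a ha b hb hab
    simp only [Finset.coe_map, Set.mem_image, Finset.mem_coe] at ha hb
    obtain ⟨a', ha', rfl⟩ := ha
    obtain ⟨b', hb', rfl⟩ := hb
    exact e.map_adj_iff.mpr (h ha' hb' (fun hh => hab (by rw [hh])))

lemma cliqueFinset_iso (e : A ≃g B) (r : ℕ) :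
    (A.cliqueFinset r).map ⟨Finset.map e.toEquiv.toEmbedding, Finset.map_injective _⟩
      = B.cliqueFinset r := by
  ext T
  simp only [Finset.mem_map, mem_cliqueFinset_iff, Function.Embedding.coeFn_mk]
  constructor
  · rintro ⟨S, hS, rfl⟩; exact (isNClique_iso e).mpr hS
  · intro hT
    refine ⟨T.map e.symm.toEquiv.toEmbedding, (isNClique_iso e.symm).mpr hT, ?_⟩
    rw [Finset.map_map]
    ext x
    simp

lemma kapF_iso (e : A ≃g B) (r : ℕ) : kapF A r = kapF B r := by
  rw [kapF, kapF, ← cliqueFinset_iso e r, Finset.card_map]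

lemma AF_iso (e : A ≃g B) (r : ℕ) (v : α) : AF A r v = AF B r (e v) := by
  rw [AF, AF, ← cliqueFinset_iso e r, Finset.filter_map]
  rw [Finset.card_map]
  congr 1
  apply Finset.filter_congr
  intro T _
  simp only [Function.Embedding.coeFn_mk, Function.comp_apply]
  exact (Finset.mem_map' _).symm


lemma degF_iso (e : A ≃g B) (v : α) : degF A v = degF B (e v) := by
  rw [degF, degF]
  have : (A.neighborFinset v).map e.toEquiv.toEmbedding = B.neighborFinset (e v) := by
    ext b
    simp only [Finset.mem_map, mem_neighborFinset, Equiv.toEmbedding_apply]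
    constructor
    · rintro ⟨a, ha, rfl⟩; exact e.map_adj_iff.mpr ha
    · intro hb
      exact ⟨e.symm b, by
        have : B.Adj (e v) (e (e.symm b)) := by simpa using hb
        exact e.map_adj_iff.mp this, by simp⟩
  rw [← this, Finset.card_map]

lemma E2F_iso (e : A ≃g B) : E2F A = E2F B := by
  rw [E2F, E2F, ← Equiv.sum_comp e.toEquiv (fun x => degF B x)]
  exact Finset.sum_congr rfl (fun x _ => degF_iso e x)

lemma tF_iso (e : A ≃g B) (r D : ℕ) : tF A r D = tF B r D := by
  rw [tF, tF, ← Equiv.sum_comp e.toEquiv (fun x => if degF B x = D then AF B r x else 0)]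
  refine Finset.sum_congr rfl (fun x _ => ?_)
  rw [show degF A x = degF B (e.toEquiv x) from degF_iso e x,
    show AF A r x = AF B r (e.toEquiv x) from AF_iso e r x]

end Iso

section Gcard

instance gcardAdjDec {V : Type*} (G : SimpleGraph V) [h : DecidableRel G.Adj] (v : V) :
    DecidableRel (gcard G v).Adj := fun a b => h a.1 b.1

variable {V : Type*} [Fintype V] [DecidableEq V] (G : SimpleGraph V) [DecidableRel G.Adj] (v : V)

lemma gcard_adj (a b : {x : V // x ≠ v}) : (gcard G v).Adj a b ↔ G.Adj a.1 b.1 := Iff.rfl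

lemma isNClique_gcard_iff {r : ℕ} {T : Finset {x : V // x ≠ v}} :
    G.IsNClique r (T.map (Function.Embedding.subtype _)) ↔ (gcard G v).IsNClique r T := by
  simp only [isNClique_iff, Finset.card_map, and_congr_left_iff]
  intro _
  constructor
  · intro h a ha b hb hab
    have h1 : a.1 ∈ T.map (Function.Embedding.subtype _) :=
      Finset.mem_map_of_mem _ (Finset.mem_coe.mp ha)
    have h2 : b.1 ∈ T.map (Function.Embedding.subtype _) :=
      Finset.mem_map_of_mem _ (Finset.mem_coe.mp hb)
    exact (gcard_adj G v a b).mpr (h h1 h2 (fun hh => hab (Subtype.ext hh)))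
  · intro h a ha b hb hab
    simp only [Finset.coe_map, Set.mem_image, Finset.mem_coe] at ha hb
    obtain ⟨a', ha', rfl⟩ := ha
    obtain ⟨b', hb', rfl⟩ := hb
    exact (gcard_adj G v a' b').mp
      (h ha' hb' (fun hh => hab (congrArg _ hh)))

lemma gcard_cliqueFinset (r : ℕ) :
    ((gcard G v).cliqueFinset r).map
        ⟨Finset.map (Function.Embedding.subtype _), Finset.map_injective _⟩
      = (G.cliqueFinset r).filter (fun T => v ∉ T) := by
  ext T
  simp only [Finset.mem_map, mem_cliqueFinset_iff, Function.Embedding.coeFn_mk,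
    Finset.mem_filter]
  constructor
  · rintro ⟨S, hS, rfl⟩
    refine ⟨(isNClique_gcard_iff G v).mpr hS, ?_⟩
    intro hv
    obtain ⟨x, -, hx⟩ := Finset.mem_map.mp hv
    exact x.2 hx
  · rintro ⟨hT, hv⟩
    refine ⟨T.subtype (· ≠ v), ?_, ?_⟩
    · apply (isNClique_gcard_iff G v).mp
      rwa [Finset.subtype_map, Finset.filter_true_of_mem]
      intro x hx hxv
      exact hv (hxv ▸ hx)
    · rw [Finset.subtype_map, Finset.filter_true_of_mem]
      intro x hx hxv
      exact hv (hxv ▸ hx)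

lemma kapF_gcard (r : ℕ) : kapF (gcard G v) r + AF G r v = kapF G r := by
  have h1 : kapF (gcard G v) r = ((G.cliqueFinset r).filter (fun T => v ∉ T)).card := by
    rw [← gcard_cliqueFinset G v r, Finset.card_map, kapF]
  rw [h1, AF, add_comm]
  exact Finset.card_filter_add_card_filter_not (fun T => v ∈ T)

lemma AF_gcard (r : ℕ) (x : {x : V // x ≠ v}) (hx : ¬ G.Adj v x.1) :
    AF (gcard G v) r x = AF G r x.1 := by
  have h1 : (((gcard G v).cliqueFinset r).filter (fun T => x ∈ T)).map
      ⟨Finset.map (Function.Embedding.subtype _), Finset.map_injective _⟩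
      = ((G.cliqueFinset r).filter (fun T => v ∉ T)).filter (fun T => x.1 ∈ T) := by
    rw [← gcard_cliqueFinset G v r, Finset.filter_map]
    congr 1
    apply Finset.filter_congr
    intro T _
    simp only [Function.Embedding.coeFn_mk, Function.comp_apply]
    constructor
    · intro h; exact Finset.mem_map_of_mem _ h
    · intro h
      obtain ⟨y, hy, hyx⟩ := Finset.mem_map.mp h
      have : y = x := Subtype.ext hyx
      exact this ▸ hy
  have h2 : ((G.cliqueFinset r).filter (fun T => v ∉ T)).filter (fun T => x.1 ∈ T)
      = (G.cliqueFinset r).filter (fun T => x.1 ∈ T) := by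
    rw [Finset.filter_filter]
    apply Finset.filter_congr
    intro T hT
    simp only [mem_cliqueFinset_iff] at hT
    constructor
    · rintro ⟨-, h⟩; exact h
    · intro h
      refine ⟨fun hv => ?_, h⟩
      have hne : v ≠ x.1 := fun hh => x.2 hh.symm
      exact hx (hT.1 (Finset.mem_coe.mpr hv) (Finset.mem_coe.mpr h) hne)
  rw [AF, ← Finset.card_map
    (f := (⟨Finset.map (Function.Embedding.subtype _), Finset.map_injective _⟩ :
      Finset {x : V // x ≠ v} ↪ Finset V)), h1, h2, AF]

end Gcard

section Gcard2
variable {V : Type*} [Fintype V] [DecidableEq V] (G : SimpleGraph V) [DecidableRel G.Adj] (v : V)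

lemma sum_subtype_ne (f : V → ℕ) : (∑ x : {x : V // x ≠ v}, f x.1) + f v = ∑ x, f x := by
  have h1 : ∑ x ∈ Finset.univ.erase v, f x = ∑ x : {x : V // x ≠ v}, f x.1 := by
    apply Finset.sum_subtype
    intro x
    simp [Finset.mem_erase]
  rw [← h1]
  exact Finset.sum_erase_add _ _ (Finset.mem_univ v)

lemma degF_gcard (x : {x : V // x ≠ v}) :
    degF (gcard G v) x + (if G.Adj v x.1 then 1 else 0) = degF G x.1 := by
  have hmap : ((gcard G v).neighborFinset x).map (Function.Embedding.subtype _)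
      = (G.neighborFinset x.1).filter (fun y => y ≠ v) := by
    ext y
    simp only [Finset.mem_map, mem_neighborFinset, Finset.mem_filter,
      Function.Embedding.coe_subtype]
    constructor
    · rintro ⟨a, ha, rfl⟩
      exact ⟨(gcard_adj G v x a).mp ha, a.2⟩
    · rintro ⟨hy, hyv⟩
      exact ⟨⟨y, hyv⟩, (gcard_adj G v x ⟨y, hyv⟩).mpr hy, rfl⟩
  have h1 : degF (gcard G v) x = ((G.neighborFinset x.1).filter (fun y => y ≠ v)).card := by
    rw [degF, ← Finset.card_map (f := Function.Embedding.subtype (fun y : V => y ≠ v)), hmap]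
  have h2 : ((G.neighborFinset x.1).filter (fun y => ¬ (y ≠ v))).card
      = if G.Adj v x.1 then 1 else 0 := by
    have : (G.neighborFinset x.1).filter (fun y => ¬ (y ≠ v))
        = (G.neighborFinset x.1).filter (fun y => y = v) := by
      apply Finset.filter_congr; intro y _; simp
    rw [this, Finset.filter_eq']
    by_cases hadj : G.Adj v x.1
    · rw [if_pos ((mem_neighborFinset G x.1 v).mpr (G.adj_symm hadj)), if_pos hadj,
        Finset.card_singleton]
    · rw [if_neg (fun hmem => hadj (G.adj_symm ((mem_neighborFinset G x.1 v).mp hmem))),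
        if_neg hadj, Finset.card_empty]
  rw [h1, ← h2, degF]
  exact Finset.card_filter_add_card_filter_not _

lemma E2F_gcard : E2F (gcard G v) + 2 * degF G v = E2F G := by
  have hsum : E2F (gcard G v) + (∑ x : {x : V // x ≠ v}, if G.Adj v x.1 then 1 else 0)
      = ∑ x : {x : V // x ≠ v}, degF G x.1 := by
    rw [E2F, ← Finset.sum_add_distrib]
    exact Finset.sum_congr rfl (fun x _ => degF_gcard G v x)
  have hdeg : (∑ x : {x : V // x ≠ v}, if G.Adj v x.1 then 1 else 0) = degF G v := by
    have h1 := sum_subtype_ne v (fun x => if G.Adj v x then 1 else 0)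
    rw [if_neg (G.irrefl), add_zero] at h1
    rw [h1, degF, neighborFinset_eq_filter, Finset.card_filter]
  have h2 := sum_subtype_ne v (fun x => degF G x)
  rw [hdeg] at hsum
  have h6 : E2F G = ∑ x, degF G x := rfl
  omega

lemma tF_gcard (r D : ℕ) (hmax : ∀ x, degF G x ≤ D) :
    tF (gcard G v) r D
      = ∑ x, if degF G x = D ∧ ¬ G.Adj v x ∧ x ≠ v then AF G r x else 0 := by
  have hpt : ∀ x : {x : V // x ≠ v},
      (if degF (gcard G v) x = D then AF (gcard G v) r x else 0)
      = (if degF G x.1 = D ∧ ¬ G.Adj v x.1 ∧ x.1 ≠ v then AF G r x.1 else 0) := by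
    intro x
    by_cases hadj : G.Adj v x.1
    · have h1 := degF_gcard G v x
      rw [if_pos hadj] at h1
      rw [if_neg, if_neg]
      · rintro ⟨-, hna, -⟩; exact hna hadj
      · intro hD
        have h3 : degF G x.1 ≤ D := hmax x.1
        omega
    · have h1 := degF_gcard G v x
      rw [if_neg hadj, add_zero] at h1
      rw [h1, AF_gcard G v r x hadj]
      have hiff : (degF G x.1 = D ∧ ¬G.Adj v x.1 ∧ x.1 ≠ v) ↔ degF G x.1 = D := by
        simp [hadj, x.2]
      rw [if_congr hiff rfl rfl]
  have h1 : tF (gcard G v) r D = ∑ x : {x : V // x ≠ v},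
      if degF G x.1 = D ∧ ¬ G.Adj v x.1 ∧ x.1 ≠ v then AF G r x.1 else 0 :=
    Finset.sum_congr rfl (fun x _ => hpt x)
  have h2 := sum_subtype_ne v (fun x => if degF G x = D ∧ ¬ G.Adj v x ∧ x ≠ v then AF G r x else 0)
  rw [if_neg (by simp), add_zero] at h2
  rw [h1, h2]

lemma sum_AF (r : ℕ) : ∑ x, AF G r x = r * kapF G r := by
  calc ∑ x, AF G r x = ∑ x, ∑ T ∈ G.cliqueFinset r, if x ∈ T then 1 else 0 :=
        Finset.sum_congr rfl fun x _ => Finset.card_filter _ _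
    _ = ∑ T ∈ G.cliqueFinset r, ∑ x, if x ∈ T then 1 else 0 := Finset.sum_comm
    _ = ∑ T ∈ G.cliqueFinset r, r := by
        refine Finset.sum_congr rfl fun T hT => ?_
        rw [← Finset.card_filter]
        have : Finset.univ.filter (fun x => x ∈ T) = T := by
          ext x; simp
        rw [this]
        exact (mem_cliqueFinset_iff.mp hT).2
    _ = r * kapF G r := by rw [Finset.sum_const, smul_eq_mul, kapF, Nat.mul_comm]

lemma card_nonnbrs (x : V) :
    (Finset.univ.filter (fun y => ¬ G.Adj y x ∧ x ≠ y)).card + (degF G x + 1)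
      = Fintype.card V := by
  have hcompl : Finset.univ.filter (fun y => ¬(¬ G.Adj y x ∧ x ≠ y))
      = insert x (G.neighborFinset x) := by
    ext y
    simp only [Finset.mem_filter, Finset.mem_univ, true_and, Finset.mem_insert,
      mem_neighborFinset]
    constructor
    · intro h
      by_cases hyx : y = x
      · exact Or.inl hyx
      · refine Or.inr ?_
        by_contra hadj
        exact h ⟨fun ha => hadj (G.adj_symm ha), fun he => hyx he.symm⟩
    · rintro (rfl | h)
      · intro hc; exact hc.2 rfl
      · intro hc; exact hc.1 (G.adj_symm h)
  have hins : (insert x (G.neighborFinset x)).card = degF G x + 1 := by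
    rw [Finset.card_insert_of_notMem (by simp), degF]
  have h4 := Finset.card_filter_add_card_filter_not
    (s := (Finset.univ : Finset V)) (p := fun y => ¬ G.Adj y x ∧ x ≠ y)
  rw [Finset.card_univ] at h4
  have h5 : (Finset.univ.filter (fun a => ¬ (fun y => ¬ G.Adj y x ∧ x ≠ y) a)).card
      = degF G x + 1 := by
    have heq : (Finset.univ.filter (fun a => ¬ (fun y => ¬ G.Adj y x ∧ x ≠ y) a))
        = Finset.univ.filter (fun y => ¬(¬ G.Adj y x ∧ x ≠ y)) := rfl
    rw [heq, hcompl, hins]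
  rw [h5] at h4
  exact h4

lemma sum_t (u : V) (D r c : ℕ)
    (hmax : ∀ x, degF G x ≤ D)
    (hclique : ∀ x y, degF G x = D → degF G y = D → x ≠ y → G.Adj x y)
    (hu : degF G u = D)
    (hc : c + (D + 1) = Fintype.card V) :
    ∑ v : {x : V // x ≠ u}, tF (gcard G v.1) r D = c * tF G r D := by
  have h1 : ∑ v : {x : V // x ≠ u}, tF (gcard G v.1) r D
      = ∑ v : {x : V // x ≠ u}, ∑ x,
          if degF G x = D ∧ ¬ G.Adj v.1 x ∧ x ≠ v.1 then AF G r x else 0 :=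
    Finset.sum_congr rfl fun v _ => tF_gcard G v.1 r D hmax
  have hu0 : (∑ x, if degF G x = D ∧ ¬ G.Adj u x ∧ x ≠ u then AF G r x else 0) = 0 := by
    apply Finset.sum_eq_zero
    intro x _
    rw [if_neg]
    rintro ⟨hxD, hna, hxu⟩
    exact hna (G.adj_symm (hclique x u hxD hu hxu))
  have h2 := sum_subtype_ne u
    (fun v => ∑ x, if degF G x = D ∧ ¬ G.Adj v x ∧ x ≠ v then AF G r x else 0)
  rw [hu0, add_zero] at h2
  have h3 : ∀ x : V, (∑ v, if degF G x = D ∧ ¬ G.Adj v x ∧ x ≠ v then AF G r x else 0)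
      = if degF G x = D then c * AF G r x else 0 := by
    intro x
    by_cases hxD : degF G x = D
    · rw [if_pos hxD]
      have hpt : ∀ v : V, (if degF G x = D ∧ ¬ G.Adj v x ∧ x ≠ v then AF G r x else 0)
          = if (¬ G.Adj v x ∧ x ≠ v) then AF G r x else 0 := by
        intro v
        by_cases h : ¬ G.Adj v x ∧ x ≠ v <;> simp [h, hxD]
      rw [Finset.sum_congr rfl fun v _ => hpt v, ← Finset.sum_filter,
        Finset.sum_const, smul_eq_mul]
      have hcnt := card_nonnbrs G x
      rw [hxD] at hcnt
      have : (Finset.univ.filter (fun y => ¬ G.Adj y x ∧ x ≠ y)).card = c := by omega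
      rw [this]
    · rw [if_neg hxD]
      exact Finset.sum_eq_zero fun v _ => if_neg (by rintro ⟨h, -⟩; exact hxD h)
  calc ∑ v : {x : V // x ≠ u}, tF (gcard G v.1) r D
      = ∑ v, ∑ x, if degF G x = D ∧ ¬ G.Adj v x ∧ x ≠ v then AF G r x else 0 := by
        rw [h1, h2]
    _ = ∑ x, ∑ v, if degF G x = D ∧ ¬ G.Adj v x ∧ x ≠ v then AF G r x else 0 :=
        Finset.sum_comm
    _ = ∑ x, if degF G x = D then c * AF G r x else 0 :=
        Finset.sum_congr rfl fun x _ => h3 x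
    _ = c * tF G r D := by
        rw [tF, Finset.mul_sum]
        refine Finset.sum_congr rfl fun x _ => ?_
        by_cases hxD : degF G x = D <;> simp [hxD]

lemma card_subtype_ne (u : V) : Fintype.card {x : V // x ≠ u} + 1 = Fintype.card V := by
  classical
  rw [Fintype.card_subtype]
  have h1 : Finset.univ.filter (fun x : V => x ≠ u) = Finset.univ.erase u := by
    ext x; simp [Finset.mem_erase]
  rw [h1, Finset.card_erase_of_mem (Finset.mem_univ u), Finset.card_univ]
  have h2 : 1 ≤ Fintype.card V := Fintype.card_pos_iff.mpr ⟨u⟩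
  omega

lemma sum_kap_cards_n (u : V) (r : ℕ) :
    (∑ v : {x : V // x ≠ u}, kapF (gcard G v.1) r) + (∑ v : {x : V // x ≠ u}, AF G r v.1)
      = (Fintype.card {x : V // x ≠ u}) * kapF G r := by
  rw [← Finset.sum_add_distrib]
  calc (∑ v : {x : V // x ≠ u}, (kapF (gcard G v.1) r + AF G r v.1))
      = ∑ _v : {x : V // x ≠ u}, kapF G r :=
        Finset.sum_congr rfl fun v _ => kapF_gcard G v.1 r
    _ = (Fintype.card {x : V // x ≠ u}) * kapF G r := by
        rw [Finset.sum_const, Finset.card_univ, smul_eq_mul]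

lemma sum_AF_sub (u : V) (r : ℕ) :
    (∑ v : {x : V // x ≠ u}, AF G r v.1) + AF G r u = r * kapF G r := by
  have h3 := sum_subtype_ne u (fun x => AF G r x)
  rw [sum_AF] at h3
  exact h3

lemma sum_E2_cards_n (u : V) :
    (∑ v : {x : V // x ≠ u}, E2F (gcard G v.1)) + 2 * (∑ v : {x : V // x ≠ u}, degF G v.1)
      = (Fintype.card {x : V // x ≠ u}) * E2F G := by
  rw [Finset.mul_sum, ← Finset.sum_add_distrib]
  calc (∑ v : {x : V // x ≠ u}, (E2F (gcard G v.1) + 2 * degF G v.1))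
      = ∑ _v : {x : V // x ≠ u}, E2F G :=
        Finset.sum_congr rfl fun v _ => by have := E2F_gcard G v.1; omega
    _ = (Fintype.card {x : V // x ≠ u}) * E2F G := by
        rw [Finset.sum_const, Finset.card_univ, smul_eq_mul]

lemma sum_degF_sub (u : V) :
    (∑ v : {x : V // x ≠ u}, degF G v.1) + degF G u = E2F G :=
  sum_subtype_ne u (degF G)

lemma sum_kapf_filtered_n (u : V) (r D : ℕ) :
    (∑ v : {x : V // x ≠ u}, if degF G v.1 = D then kapF (gcard G v.1) r else 0)
      + (∑ v : {x : V // x ≠ u}, if degF G v.1 = D then AF G r v.1 else 0)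
      = (∑ v : {x : V // x ≠ u}, if degF G v.1 = D then 1 else 0) * kapF G r := by
  rw [← Finset.sum_add_distrib, Finset.sum_mul]
  refine Finset.sum_congr rfl fun v _ => ?_
  by_cases h : degF G v.1 = D
  · rw [if_pos h, if_pos h, if_pos h, one_mul]
    exact kapF_gcard G v.1 r
  · rw [if_neg h, if_neg h, if_neg h, zero_mul, add_zero]

lemma sum_AF_filtered_sub (u : V) (r D : ℕ) (hu : degF G u = D) :
    (∑ v : {x : V // x ≠ u}, if degF G v.1 = D then AF G r v.1 else 0) + AF G r u
      = tF G r D := by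
  have h3 := sum_subtype_ne u (fun x => if degF G x = D then AF G r x else 0)
  rw [if_pos hu] at h3
  rw [tF]
  exact h3

lemma sum_one_filtered_sub (u : V) (D : ℕ) (hu : degF G u = D) :
    (∑ v : {x : V // x ≠ u}, if degF G v.1 = D then 1 else 0) + 1
      = (Finset.univ.filter (fun x => degF G x = D)).card := by
  have h3 := sum_subtype_ne u (fun x => if degF G x = D then 1 else 0)
  rw [if_pos hu] at h3
  rw [Finset.card_filter]
  exact h3

end Gcard2

section Connect
variable {V : Type*} [Fintype V] [DecidableEq V] (G : SimpleGraph V) [DecidableRel G.Adj]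

lemma deg_eq_degF (v : V) : deg G v = degF G v := by
  rw [deg, degF, neighborFinset_def, Set.ncard_eq_toFinset_card']

lemma kappa_eq_kapF (r : ℕ) : kappa G r = kapF G r := by
  rw [kappa, kapF, ← SimpleGraph.coe_cliqueFinset, Set.ncard_coe_finset]

lemma adj_deg_pos {x y : V} (h : G.Adj x y) : 0 < degF G x :=
  Finset.card_pos.mpr ⟨y, (mem_neighborFinset G x y).mpr h⟩

end Connect

section ConnectFin
variable {n : ℕ} (G : SimpleGraph (Fin n)) [DecidableRel G.Adj]

lemma degF_le_maxDeg (v : Fin n) : degF G v ≤ maxDeg G := by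
  rw [← deg_eq_degF]
  exact Finset.le_sup (Finset.mem_univ v)

lemma numMaxDeg_eq : numMaxDeg G
    = (Finset.univ.filter (fun v => degF G v = maxDeg G)).card := by
  rw [numMaxDeg]
  congr 1
  apply Finset.filter_congr
  intro x _
  rw [deg_eq_degF]

lemma maxdeg_zero_contra (h0 : maxDeg G = 0)
    (hclique : G.IsClique {v : Fin n | deg G v = maxDeg G})
    (a b : Fin n) (hab : a ≠ b) : False := by
  have hd : ∀ x, deg G x = maxDeg G := by
    intro x
    have h1 := degF_le_maxDeg G x
    have h2 := deg_eq_degF G x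
    omega
  have hadj : G.Adj a b := hclique (hd a) (hd b) hab
  have h3 := adj_deg_pos G hadj
  have h4 := hd a
  rw [deg_eq_degF G a, h0] at h4
  omega

end ConnectFin

end CliqueAux
open CliqueAux

theorem clique_count_of_maxDeg_clique {n : ℕ}
    (G H : SimpleGraph (Fin n)) (u w : Fin n)
    (π : {x : Fin n // x ≠ u} ≃ {y : Fin n // y ≠ w})
    (hshare : ShareCardsVia G H u w π)
    (hDelta : maxDeg G = maxDeg H) (hDeltan : maxDeg G ≤ n - 2)
    (hcliqueG : G.IsClique {v : Fin n | deg G v = maxDeg G})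
    (hcliqueH : H.IsClique {v : Fin n | deg H v = maxDeg H})
    (hu : deg G u = maxDeg G) (hw : deg H w = maxDeg H)
    (l : ℕ) (hlG : numMaxDeg G = l) (hlH : numMaxDeg H = l) :
    ∀ r : ℕ, 1 ≤ r → n ≠ l + r → kappa G r = kappa H r := by
  classical
  letI instG : DecidableRel G.Adj := Classical.decRel _
  letI instH : DecidableRel H.Adj := Classical.decRel _
  intro r hr hnlr
  rcases lt_or_ge n 4 with hn4 | hn4
  · -- small cases n = 0, 1, 2, 3
    interval_cases n
    · exact u.elim0
    · -- n = 1 : both graphs are the empty graph on one vertex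
      have hGH : G = H := by
        ext a b
        have hab : a = b := by
          have h1 := a.isLt
          have h2 := b.isLt
          exact Fin.ext (by omega)
        subst hab
        simp
      rw [hGH]
    · -- n = 2 : the hypotheses are contradictory
      exact absurd hcliqueG (fun hcl => maxdeg_zero_contra G (by omega) hcl 0 1 (by decide))
    · -- n = 3
      have hD1 : maxDeg G ≤ 1 := by omega
      rcases Nat.le_one_iff_eq_zero_or_eq_one.mp hD1 with h1 | h1
      · exact absurd hcliqueG (fun hcl => maxdeg_zero_contra G h1 hcl 0 1 (by decide))
      · -- maxDeg = 1 : both graphs are a single edge plus an isolated vertex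
        have h1H : maxDeg H = 1 := by rw [← hDelta]; exact h1
        rw [deg_eq_degF] at hu hw
        rw [h1] at hu
        rw [h1H] at hw
        -- structure of G
        obtain ⟨b, hb⟩ : ∃ b, G.neighborFinset u = {b} := Finset.card_eq_one.mp hu
        have hub : G.Adj u b := by
          have : b ∈ G.neighborFinset u := by rw [hb]; exact Finset.mem_singleton_self b
          exact (mem_neighborFinset G u b).mp this
        have hbu : b ≠ u := fun h => G.irrefl (h ▸ hub)
        have hSG : ∀ x, degF G x = 1 → x = u ∨ x = b := by
          intro x hx
          by_cases hxu : x = u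
          · exact Or.inl hxu
          · right
            have hadj : G.Adj x u := hcliqueG
              (by rw [Set.mem_setOf_eq, deg_eq_degF, h1]; exact hx)
              (by rw [Set.mem_setOf_eq, deg_eq_degF, h1]; exact hu) hxu
            have hmem : x ∈ G.neighborFinset u := (mem_neighborFinset G u x).mpr (G.adj_symm hadj)
            rw [hb] at hmem
            exact Finset.mem_singleton.mp hmem
        have adjG : ∀ x y, G.Adj x y ↔ ((x = u ∧ y = b) ∨ (x = b ∧ y = u)) := by
          intro x y
          constructor
          · intro hxy
            have hx1 : degF G x = 1 := le_antisymm (h1 ▸ degF_le_maxDeg G x) (adj_deg_pos G hxy)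
            have hy1 : degF G y = 1 :=
              le_antisymm (h1 ▸ degF_le_maxDeg G y) (adj_deg_pos G (G.adj_symm hxy))
            have hxy' : x ≠ y := G.ne_of_adj hxy
            rcases hSG x hx1 with rfl | rfl <;> rcases hSG y hy1 with rfl | rfl
            · exact absurd rfl hxy'
            · exact Or.inl ⟨rfl, rfl⟩
            · exact Or.inr ⟨rfl, rfl⟩
            · exact absurd rfl hxy'
          · rintro (⟨rfl, rfl⟩ | ⟨rfl, rfl⟩)
            · exact hub
            · exact G.adj_symm hub
        -- structure of H
        obtain ⟨b', hb'⟩ : ∃ b', H.neighborFinset w = {b'} := Finset.card_eq_one.mp hw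
        have hwb' : H.Adj w b' := by
          have : b' ∈ H.neighborFinset w := by rw [hb']; exact Finset.mem_singleton_self b'
          exact (mem_neighborFinset H w b').mp this
        have hb'w : b' ≠ w := fun h => H.irrefl (h ▸ hwb')
        have hSH : ∀ x, degF H x = 1 → x = w ∨ x = b' := by
          intro x hx
          by_cases hxw : x = w
          · exact Or.inl hxw
          · right
            have hadj : H.Adj x w := hcliqueH
              (by rw [Set.mem_setOf_eq, deg_eq_degF, h1H]; exact hx)
              (by rw [Set.mem_setOf_eq, deg_eq_degF, h1H]; exact hw) hxw
            have hmem : x ∈ H.neighborFinset w := (mem_neighborFinset H w x).mpr (H.adj_symm hadj)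
            rw [hb'] at hmem
            exact Finset.mem_singleton.mp hmem
        have adjH : ∀ x y, H.Adj x y ↔ ((x = w ∧ y = b') ∨ (x = b' ∧ y = w)) := by
          intro x y
          constructor
          · intro hxy
            have hx1 : degF H x = 1 :=
              le_antisymm (h1H ▸ degF_le_maxDeg H x) (adj_deg_pos H hxy)
            have hy1 : degF H y = 1 :=
              le_antisymm (h1H ▸ degF_le_maxDeg H y) (adj_deg_pos H (H.adj_symm hxy))
            have hxy' : x ≠ y := H.ne_of_adj hxy
            rcases hSH x hx1 with rfl | rfl <;> rcases hSH y hy1 with rfl | rfl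
            · exact absurd rfl hxy'
            · exact Or.inl ⟨rfl, rfl⟩
            · exact Or.inr ⟨rfl, rfl⟩
            · exact absurd rfl hxy'
          · rintro (⟨rfl, rfl⟩ | ⟨rfl, rfl⟩)
            · exact hwb'
            · exact H.adj_symm hwb'
        -- the third vertex of H
        have hcard : (Finset.univ \ {w, b'} : Finset (Fin 3)).card = 1 := by
          rw [Finset.card_sdiff_of_subset (Finset.subset_univ _)]
          have h2 : ({w, b'} : Finset (Fin 3)).card = 2 := by
            rw [Finset.card_insert_of_notMem (fun hmem => hb'w (Finset.mem_singleton.mp hmem).symm),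
              Finset.card_singleton]
          rw [h2, Finset.card_univ, Fintype.card_fin]
        obtain ⟨c', hc'⟩ := Finset.card_eq_one.mp hcard
        have hc'mem : c' ∈ Finset.univ \ ({w, b'} : Finset (Fin 3)) := by
          rw [hc']; exact Finset.mem_singleton_self c'
        have hc'w : c' ≠ w := by
          intro h; rw [Finset.mem_sdiff] at hc'mem
          exact hc'mem.2 (by rw [h]; exact Finset.mem_insert_self _ _)
        have hc'b : c' ≠ b' := by
          intro h; rw [Finset.mem_sdiff] at hc'mem
          exact hc'mem.2 (by rw [h]; exact Finset.mem_insert_of_mem (Finset.mem_singleton_self _))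
        -- uniqueness of third vertex in G
        have hGcard : (Finset.univ \ {u, b} : Finset (Fin 3)).card = 1 := by
          rw [Finset.card_sdiff_of_subset (Finset.subset_univ _)]
          have h2 : ({u, b} : Finset (Fin 3)).card = 2 := by
            rw [Finset.card_insert_of_notMem (fun hmem => hbu (Finset.mem_singleton.mp hmem).symm),
              Finset.card_singleton]
          rw [h2, Finset.card_univ, Fintype.card_fin]
        obtain ⟨c, hcG⟩ := Finset.card_eq_one.mp hGcard
        have huniq : ∀ x : Fin 3, x ≠ u → x ≠ b → x = c := by
          intro x hx1 hx2
          have : x ∈ Finset.univ \ ({u, b} : Finset (Fin 3)) := by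
            rw [Finset.mem_sdiff]
            refine ⟨Finset.mem_univ x, fun hmem => ?_⟩
            rcases Finset.mem_insert.mp hmem with h | h
            · exact hx1 h
            · exact hx2 (Finset.mem_singleton.mp h)
          rw [hcG] at this
          exact Finset.mem_singleton.mp this
        -- the bijection
        set f : Fin 3 → Fin 3 := fun x => if x = u then w else if x = b then b' else c' with hf
        have hinj : Function.Injective f := by
          intro x y hxy
          simp only [hf] at hxy
          by_cases hx1 : x = u
          · by_cases hy1 : y = u
            · rw [hx1, hy1]
            · rw [if_pos hx1] at hxy
              by_cases hy2 : y = b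
              · rw [if_neg hy1, if_pos hy2] at hxy
                exact absurd hxy (H.ne_of_adj hwb')
              · rw [if_neg hy1, if_neg hy2] at hxy
                exact absurd hxy.symm hc'w
          · by_cases hx2 : x = b
            · rw [if_neg hx1, if_pos hx2] at hxy
              by_cases hy1 : y = u
              · rw [if_pos hy1] at hxy
                exact absurd hxy hb'w
              · by_cases hy2 : y = b
                · rw [hx2, hy2]
                · rw [if_neg hy1, if_neg hy2] at hxy
                  exact absurd hxy.symm hc'b
            · rw [if_neg hx1, if_neg hx2] at hxy
              by_cases hy1 : y = u
              · rw [if_pos hy1] at hxy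
                exact absurd hxy hc'w
              · by_cases hy2 : y = b
                · rw [if_neg hy1, if_pos hy2] at hxy
                  exact absurd hxy hc'b
                · rw [huniq x hx1 hx2, huniq y hy1 hy2]
        have hbij : Function.Bijective f := Finite.injective_iff_bijective.mp hinj
        set e : Fin 3 ≃ Fin 3 := Equiv.ofBijective f hbij with he
        have heval : ∀ x, e x = f x := fun x => rfl
        have hfw : ∀ x, f x = w ↔ x = u := by
          intro x
          constructor
          · intro h
            have hfu : f u = w := by simp [hf]
            exact hinj (h.trans hfu.symm)
          · intro h; rw [h]; simp [hf]
        have hfb : ∀ x, f x = b' ↔ x = b := by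
          intro x
          constructor
          · intro h
            have hfbb : f b = b' := by simp [hf, hbu]
            exact hinj (h.trans hfbb.symm)
          · intro h; rw [h]; simp [hf, hbu]
        have iso : G ≃g H := by
          refine ⟨e, ?_⟩
          intro x y
          rw [heval, heval, adjH, adjG, hfw, hfb, hfw, hfb]
        rw [CliqueAux.kappa_eq_kapF, CliqueAux.kappa_eq_kapF]
        exact kapF_iso iso r
  · -- main case, n ≥ 4
    rw [CliqueAux.kappa_eq_kapF, CliqueAux.kappa_eq_kapF]
    set D := maxDeg G with hD
    have hDn : D + 2 ≤ n := by omega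
    have hmaxG : ∀ x, degF G x ≤ D := fun x => degF_le_maxDeg G x
    have hmaxH : ∀ x, degF H x ≤ D := fun x => hDelta ▸ degF_le_maxDeg H x
    have huF : degF G u = D := by rw [← deg_eq_degF]; exact hu
    have hwF : degF H w = D := by rw [← deg_eq_degF, hw, hDelta]
    have hclG : ∀ x y, degF G x = D → degF G y = D → x ≠ y → G.Adj x y := by
      intro x y hx hy hxy
      exact hcliqueG (by rw [Set.mem_setOf_eq, deg_eq_degF]; exact hx)
        (by rw [Set.mem_setOf_eq, deg_eq_degF]; exact hy) hxy
    have hclH : ∀ x y, degF H x = D → degF H y = D → x ≠ y → H.Adj x y := by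
      intro x y hx hy hxy
      exact hcliqueH (by rw [Set.mem_setOf_eq, deg_eq_degF, ← hDelta]; exact hx)
        (by rw [Set.mem_setOf_eq, deg_eq_degF, ← hDelta]; exact hy) hxy
    -- iso invariants
    have hE2card : ∀ v : {x : Fin n // x ≠ u}, E2F (gcard G v.1) = E2F (gcard H (π v).1) :=
      fun v => (hshare v).elim (fun e => E2F_iso e)
    have hkapcard : ∀ v : {x : Fin n // x ≠ u},
        kapF (gcard G v.1) r = kapF (gcard H (π v).1) r :=
      fun v => (hshare v).elim (fun e => kapF_iso e r)
    have htcard : ∀ v : {x : Fin n // x ≠ u}, tF (gcard G v.1) r D = tF (gcard H (π v).1) r D :=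
      fun v => (hshare v).elim (fun e => tF_iso e r D)
    -- cardinalities of punctured vertex sets
    have hmG : Fintype.card {x : Fin n // x ≠ u} + 1 = n := by
      have := card_subtype_ne u; rwa [Fintype.card_fin] at this
    have hmH : Fintype.card {y : Fin n // y ≠ w} + 1 = n := by
      have := card_subtype_ne w; rwa [Fintype.card_fin] at this
    -- Step 1: sum of degrees agree
    have hE2sum : ∑ v : {x : Fin n // x ≠ u}, E2F (gcard G v.1)
        = ∑ y : {y : Fin n // y ≠ w}, E2F (gcard H y.1) := by
      rw [Finset.sum_congr rfl fun v _ => hE2card v]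
      exact Equiv.sum_comp π (fun y => E2F (gcard H y.1))
    have hE2G := sum_E2_cards_n G u
    have hE2H := sum_E2_cards_n H w
    have hdGsub := sum_degF_sub G u
    have hdHsub := sum_degF_sub H w
    rw [huF] at hdGsub
    rw [hwF] at hdHsub
    have z6 : (Fintype.card {x : Fin n // x ≠ u} : ℤ) + 1 = n := by exact_mod_cast hmG
    have z7 : (Fintype.card {y : Fin n // y ≠ w} : ℤ) + 1 = n := by exact_mod_cast hmH
    have hE2eq : E2F G = E2F H := by
      zify at hE2G hE2H hdGsub hdHsub hE2sum
      have hz : ((n:ℤ) - 3) * ((E2F G : ℤ) - E2F H) = 0 := by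
        linear_combination (-1 : ℤ) * hE2G + hE2H + hE2sum + 2 * hdGsub - 2 * hdHsub
          - (E2F G : ℤ) * z6 + (E2F H : ℤ) * z7
      rcases mul_eq_zero.mp hz with h | h
      · exfalso; omega
      · have : (E2F G : ℤ) = E2F H := by linarith
        exact_mod_cast this
    -- Step 2: degrees are preserved by π
    have hdegpres : ∀ v : {x : Fin n // x ≠ u}, degF G v.1 = degF H (π v).1 := by
      intro v
      have g1 := E2F_gcard G v.1
      have g2 := E2F_gcard H (π v).1
      have g3 := hE2card v
      omega
    -- Step 3: incidence counts agree
    have hIeq : tF G r D = tF H r D := by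
      have hcge : (n - (D + 1)) + (D + 1) = Fintype.card (Fin n) := by
        rw [Fintype.card_fin]; omega
      have tG := sum_t G u D r (n - (D+1)) hmaxG hclG huF hcge
      have tH := sum_t H w D r (n - (D+1)) hmaxH hclH hwF hcge
      have hts : ∑ v : {x : Fin n // x ≠ u}, tF (gcard G v.1) r D
          = ∑ y : {y : Fin n // y ≠ w}, tF (gcard H y.1) r D := by
        rw [Finset.sum_congr rfl fun v _ => htcard v]
        exact Equiv.sum_comp π (fun y => tF (gcard H y.1) r D)
      rw [tG, tH] at hts
      have hcpos : 0 < n - (D + 1) := by omega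
      exact Nat.eq_of_mul_eq_mul_left hcpos hts
    -- Step 4: clique count sums
    have hkapsum : ∑ v : {x : Fin n // x ≠ u}, kapF (gcard G v.1) r
        = ∑ y : {y : Fin n // y ≠ w}, kapF (gcard H y.1) r := by
      rw [Finset.sum_congr rfl fun v _ => hkapcard v]
      exact Equiv.sum_comp π (fun y => kapF (gcard H y.1) r)
    have a1 := sum_kap_cards_n G u r
    have a2 := sum_AF_sub G u r
    have b1 := sum_kap_cards_n H w r
    have b2 := sum_AF_sub H w r
    -- Step 5: filtered clique count sums
    have hkapsumf : (∑ v : {x : Fin n // x ≠ u},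
          if degF G v.1 = D then kapF (gcard G v.1) r else 0)
        = ∑ y : {y : Fin n // y ≠ w}, if degF H y.1 = D then kapF (gcard H y.1) r else 0 := by
      rw [Finset.sum_congr rfl fun v _ => by rw [hdegpres v, hkapcard v]]
      exact Equiv.sum_comp π (fun y => if degF H y.1 = D then kapF (gcard H y.1) r else 0)
    have f1 := sum_kapf_filtered_n G u r D
    have f2 := sum_AF_filtered_sub G u r D huF
    have f3 := sum_kapf_filtered_n H w r D
    have f4 := sum_AF_filtered_sub H w r D hwF
    have q1 := sum_one_filtered_sub G u D huF
    have q2 := sum_one_filtered_sub H w D hwF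
    have hlG' : (Finset.univ.filter (fun x => degF G x = D)).card = l := by
      rw [← hlG, numMaxDeg_eq]
    have hlH' : (Finset.univ.filter (fun x => degF H x = D)).card = l := by
      rw [← hlH, numMaxDeg_eq]
      congr 1
      apply Finset.filter_congr
      intro x _
      rw [hDelta]
    rw [hlG'] at q1
    rw [hlH'] at q2
    -- final arithmetic
    zify at a1 a2 b1 b2 hkapsum hkapsumf f1 f2 f3 f4 q1 q2 hIeq
    have hfin : ((n:ℤ) - l - r) * ((kapF G r : ℤ) - (kapF H r : ℤ)) = 0 := by
      linear_combination (-1 : ℤ) * a1 + b1 + hkapsum + a2 - b2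
        - (kapF G r : ℤ) * z6 + (kapF H r : ℤ) * z7
        + f1 - f3 - hkapsumf - f2 + f4 - hIeq
        + (kapF G r : ℤ) * q1 - (kapF H r : ℤ) * q2
    have hne : ((n:ℤ) - l - r) ≠ 0 := by
      intro hcontra
      apply hnlr
      omega
    rcases mul_eq_zero.mp hfin with h | h
    · exact absurd h hne
    · have : (kapF G r : ℤ) = kapF H r := by linarith
      exact_mod_cast this
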